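/- In eventually different forcing, the ultrafilter limit satisfies the n-fold compatibility property: given sequences q̄^j = ⟨q_m^j⟩_{m<ω} in Q_{s,k} for j < n, and a condition r extending lim^D q̄^j for all j < n, the set {m < ω : r and all q_m^j for j < n have a common extension} belongs to D. -/
import Mathlib


/-- A condition of eventually different forcing `𝔼`: a triple `(s,k,φ)` with
`s ∈ ω^{<ω}`, `k < ω` and `φ : ω → [ω]^{≤k}`. -/
structure EDCond where
  s : List ℕ
  k : ℕ
  φ : ℕ → Finset ℕ
  hφ : ∀ i, (φ i).card ≤ k

/-- The order on `𝔼`: `e' ≤ e` iff `s' ⊇ s`, `k' ≥ k`, `φ'(i) ⊇ φ(i)` for all `i`, and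
`s'(i) ∉ φ(i)` for all `i ∈ dom(s') \ dom(s)`. -/
def EDle (e' e : EDCond) : Prop :=
  e.s <+: e'.s ∧ e.k ≤ e'.k ∧ (∀ i, e.φ i ⊆ e'.φ i) ∧
    ∀ i, e.s.length ≤ i → i < e'.s.length → e'.s.getD i 0 ∉ e.φ i

/-- The `n`-fold compatibility property of ultrafilter limits in eventually different
forcing: given sequences `q̄^j = ⟨(s,k,φs j m) : m < ω⟩` in `Q_{s,k}` for `j < n`, with
`D`-limits `(s,k,F j)` (where `c ∈ F j i ↔ {m : c ∈ φs j m i} ∈ D`), and a condition `r`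
extending every `lim^D q̄^j`, the set
`{m : r and all q_m^j (j < n) have a common extension}` belongs to `D`. -/
theorem stmt_13 (D : Ultrafilter ℕ) (hD : ∀ A : Set ℕ, A.Finite → A ∉ D)
    (s : List ℕ) (k n : ℕ) (φs : Fin n → ℕ → ℕ → Finset ℕ)
    (hφ : ∀ j m i, (φs j m i).card ≤ k)
    (F : Fin n → ℕ → Finset ℕ) (hF : ∀ j i, (F j i).card ≤ k)
    (hlim : ∀ j i, (F j i : Set ℕ) = {c | {m | c ∈ φs j m i} ∈ D})
    (r : EDCond) (hr : ∀ j, EDle r ⟨s, k, F j, hF j⟩) :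
    {m | ∃ c : EDCond, EDle c r ∧ ∀ j, EDle c ⟨s, k, φs j m, hφ j m⟩} ∈ D := by

  have key : ∀ᶠ m in (D : Filter ℕ), ∀ j : Fin n, ∀ i ∈ Finset.Ico s.length r.s.length,
      r.s.getD i 0 ∉ φs j m i := by
    rw [Filter.eventually_all]
    intro j
    rw [Filter.eventually_all_finset]
    intro i hi
    simp only [Finset.mem_Ico] at hi
    have h4 := (hr j).2.2.2 i hi.1 hi.2
    have : (r.s.getD i 0 ∈ (F j i : Set ℕ)) ↔ {m | r.s.getD i 0 ∈ φs j m i} ∈ D := by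
      rw [hlim j i]; rfl
    have hnot : {m | r.s.getD i 0 ∈ φs j m i} ∉ D := by
      intro hmem
      exact h4 (by simpa using this.mpr hmem)
    have := (Ultrafilter.compl_mem_iff_notMem (f := D)).mpr hnot
    filter_upwards [this] with m hm
    exact hm
  filter_upwards [key] with m hm
  refine ⟨⟨r.s, r.k + n * k, fun i => r.φ i ∪ Finset.univ.biUnion (fun j : Fin n => φs j m i),
    ?_⟩, ?_, ?_⟩
  · intro i
    calc (r.φ i ∪ Finset.univ.biUnion (fun j : Fin n => φs j m i)).card
        ≤ (r.φ i).card + (Finset.univ.biUnion (fun j : Fin n => φs j m i)).card :=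
          Finset.card_union_le _ _
      _ ≤ r.k + n * k := by
          gcongr
          · exact r.hφ i
          · calc (Finset.univ.biUnion (fun j : Fin n => φs j m i)).card
                ≤ ∑ j : Fin n, (φs j m i).card := Finset.card_biUnion_le
              _ ≤ ∑ _j : Fin n, k := Finset.sum_le_sum (fun j _ => hφ j m i)
              _ = n * k := by simp [Finset.sum_const, mul_comm]
  · exact ⟨List.prefix_refl _, Nat.le_add_right _ _,
      fun i => Finset.subset_union_left, fun i h1 h2 => absurd h2 (not_lt.mpr h1)⟩
  · intro j
    refine ⟨(hr j).1, le_trans (hr j).2.1 (Nat.le_add_right _ _), ?_, ?_⟩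
    · intro i
      exact fun x hx => Finset.mem_union_right _ (Finset.mem_biUnion.mpr ⟨j, Finset.mem_univ j, hx⟩)
    · intro i h1 h2
      exact hm j i (Finset.mem_Ico.mpr ⟨h1, h2⟩)
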